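/- Let G : ℤ³ → ℤ³ be the linear map G(m_1, m_2, m_3) = (28m_1, -752m_1 - 992m_2, 10760m_1 + 10208m_2 + 8128m_3). Then the image of G equals the set of triples (σ_1, σ_3, σ_5) ∈ ℤ³ such that 28 ∣ σ_1, 6944 ∣ (7σ_3 + 188σ_1), and 1763776 ∣ (217σ_5 + 2233σ_3 - 23418σ_1). -/
import Mathlib


/-- The image of `G(m₁,m₂,m₃) = (28m₁, -752m₁-992m₂, 10760m₁+10208m₂+8128m₃)` consists
exactly of the triples `(σ₁,σ₃,σ₅)` with `28 ∣ σ₁`, `6944 ∣ 7σ₃ + 188σ₁`, and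
`1763776 ∣ 217σ₅ + 2233σ₃ - 23418σ₁`. -/
theorem image_forgetful_CP6_D6 :
    ∀ s1 s3 s5 : ℤ,
      (∃ m1 m2 m3 : ℤ,
          s1 = 28 * m1 ∧ s3 = -752 * m1 - 992 * m2 ∧
          s5 = 10760 * m1 + 10208 * m2 + 8128 * m3) ↔
      (28 ∣ s1 ∧ 6944 ∣ (7 * s3 + 188 * s1) ∧
        1763776 ∣ (217 * s5 + 2233 * s3 - 23418 * s1)) := by
  intro s1 s3 s5
  constructor
  · rintro ⟨m1, m2, m3, h1, h3, h5⟩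
    subst h1 h3 h5
    refine ⟨⟨m1, rfl⟩, ⟨-m2, by ring⟩, ⟨m3, by ring⟩⟩
  · rintro ⟨⟨a, ha⟩, ⟨b, hb⟩, ⟨c, hc⟩⟩
    refine ⟨a, -b, c, ha, ?_, ?_⟩
    · have h7 : (7 : ℤ) * s3 = 7 * (-752 * a - 992 * (-b)) := by
        rw [ha] at hb; linarith
      exact mul_left_cancel₀ (by norm_num) h7
    · have h3 : s3 = -752 * a - 992 * (-b) := by
        have h7 : (7 : ℤ) * s3 = 7 * (-752 * a - 992 * (-b)) := by
          rw [ha] at hb; linarith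
        exact mul_left_cancel₀ (by norm_num) h7
      have h217 : (217 : ℤ) * s5 = 217 * (10760 * a + 10208 * (-b) + 8128 * c) := by
        rw [ha, h3] at hc; linarith
      exact mul_left_cancel₀ (by norm_num) h217
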